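/- Mignotte-type height bound: if g divides f in ℤ[x] with f ≠ 0, then the maximum absolute value of the coefficients of g is at most 2^{deg f} · ‖f‖₂, where ‖f‖₂ is the square root of the sum of squares of the coefficients of f. -/

import Mathlib

/-- The ℓ₂-norm of an integer polynomial. -/
noncomputable def l2norm (f : Polynomial ℤ) : ℝ :=
  Real.sqrt (∑ i ∈ f.support, ((f.coeff i : ℝ)) ^ 2)

open Polynomial Finset

noncomputable def cN (p : Polynomial ℂ) : ℝ := ∑ i ∈ p.support, ‖p.coeff i‖^2

lemma cN_nonneg (p : Polynomial ℂ) : 0 ≤ cN p :=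
  Finset.sum_nonneg fun _ _ => sq_nonneg _

lemma cN_eq_range {p : Polynomial ℂ} {m : ℕ} (h : p.natDegree < m) :
    cN p = ∑ i ∈ Finset.range m, ‖p.coeff i‖^2 := by
  apply Finset.sum_subset
  · exact p.supp_subset_range h
  · intro x _ hx
    simp [Polynomial.notMem_support_iff.1 hx]

lemma cN_flip (α : ℂ) (p : Polynomial ℂ) :
    cN ((X - C α) * p) = cN ((C (starRingEnd ℂ α) * X - C 1) * p) := by
  set n := p.natDegree with hn
  have hd1 : ((X - C α) * p).natDegree < n + 1 + 1 := by
    refine lt_of_le_of_lt natDegree_mul_le ?_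
    have : (X - C α).natDegree ≤ 1 := natDegree_X_sub_C_le α
    omega
  have hd2 : ((C (starRingEnd ℂ α) * X - C 1) * p).natDegree < n + 1 + 1 := by
    refine lt_of_le_of_lt natDegree_mul_le ?_
    have : (C (starRingEnd ℂ α) * X - C 1).natDegree ≤ 1 := by
      have := natDegree_linear_le (a := (starRingEnd ℂ α)) (b := (-1 : ℂ))
      simpa [sub_eq_add_neg] using this
    omega
  rw [cN_eq_range hd1, cN_eq_range hd2]
  have c1 : ∀ i, ((X - C α) * p).coeff (i+1) = p.coeff i - α * p.coeff (i+1) := by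
    intro i; simp [sub_mul, coeff_X_mul]
  have c1z : ((X - C α) * p).coeff 0 = -(α * p.coeff 0) := by
    simp [sub_mul, mul_coeff_zero]
  have c2 : ∀ i, ((C (starRingEnd ℂ α) * X - C 1) * p).coeff (i+1)
      = (starRingEnd ℂ α) * p.coeff i - p.coeff (i+1) := by
    intro i; simp [sub_mul, mul_assoc, coeff_X_mul, coeff_C_mul]
  have c2z : ((C (starRingEnd ℂ α) * X - C 1) * p).coeff 0 = -(p.coeff 0) := by
    simp [sub_mul, mul_assoc, mul_coeff_zero]
  have e1 := Finset.sum_range_succ' (fun i => ‖((X - C α) * p).coeff i‖^2) (n+1)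
  have e2 := Finset.sum_range_succ' (fun i => ‖((C (starRingEnd ℂ α) * X - C 1) * p).coeff i‖^2) (n+1)
  beta_reduce at e1 e2
  rw [e1, e2]
  simp only [c1, c1z, c2, c2z]
  have key : ∀ a b : ℂ, ‖a - α*b‖^2 - ‖(starRingEnd ℂ α) * a - b‖^2
      = (1 - ‖α‖^2) * (‖a‖^2 - ‖b‖^2) := by
    intro a b
    simp only [Complex.sq_norm, Complex.normSq_apply,
      Complex.sub_re, Complex.sub_im, Complex.mul_re, Complex.mul_im, Complex.conj_re,
      Complex.conj_im]
    ring
  have tele : ∑ i ∈ Finset.range (n+1), (‖p.coeff i‖^2 - ‖p.coeff (i+1)‖^2)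
      = ‖p.coeff 0‖^2 - ‖p.coeff (n+1)‖^2 := Finset.sum_range_sub' (fun i => ‖p.coeff i‖^2) (n+1)
  have hpn : p.coeff (n+1) = 0 := coeff_eq_zero_of_natDegree_lt (by omega)
  have hsum : ∑ i ∈ Finset.range (n+1), ‖p.coeff i - α * p.coeff (i+1)‖^2
      - ∑ i ∈ Finset.range (n+1), ‖(starRingEnd ℂ α) * p.coeff i - p.coeff (i+1)‖^2
      = (1 - ‖α‖^2) * ‖p.coeff 0‖^2 := by
    rw [← Finset.sum_sub_distrib]
    simp only [key]
    rw [← Finset.mul_sum, tele, hpn]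
    simp
  have hb : ‖-(α * p.coeff 0)‖^2 = ‖α‖^2 * ‖p.coeff 0‖^2 := by
    rw [norm_neg, norm_mul, mul_pow]
  have hb2 : ‖-(p.coeff 0)‖^2 = ‖p.coeff 0‖^2 := by rw [norm_neg]
  linarith [hsum, hb, hb2]

open Multiset in
noncomputable def mfactor (α : ℂ) : Polynomial ℂ :=
  if 1 < ‖α‖ then C (starRingEnd ℂ α) * X - C 1 else X - C α

lemma cN_flip' (α : ℂ) (p : Polynomial ℂ) :
    cN ((X - C α) * p) = cN (mfactor α * p) := by
  unfold mfactor
  split_ifs with h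
  · exact cN_flip α p
  · rfl

lemma cN_flip_prod (s : Multiset ℂ) : ∀ p : Polynomial ℂ,
    cN ((s.map fun α => X - C α).prod * p) = cN ((s.map mfactor).prod * p) := by
  induction s using Multiset.induction with
  | empty => intro p; simp
  | cons α s ih =>
    intro p
    rw [Multiset.map_cons, Multiset.prod_cons, Multiset.map_cons, Multiset.prod_cons]
    rw [mul_assoc, cN_flip']
    rw [show mfactor α * ((s.map fun α => X - C α).prod * p)
        = (s.map fun α => X - C α).prod * (mfactor α * p) by ring]
    rw [ih (mfactor α * p)]
    ring_nf

lemma mfactor_leadingCoeff (α : ℂ) :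
    ‖(mfactor α).leadingCoeff‖ = max 1 ‖α‖ := by
  unfold mfactor
  split_ifs with h
  · have hα0 : α ≠ 0 := by rintro rfl; rw [norm_zero] at h; linarith
    have hα : (starRingEnd ℂ) α ≠ 0 := by simpa using hα0
    rw [sub_eq_add_neg, ← Polynomial.C_neg, leadingCoeff_linear hα,
      starRingEnd_apply, norm_star, max_eq_right h.le]
  · rw [leadingCoeff_X_sub_C, norm_one]
    push_neg at h
    rw [max_eq_left h]

lemma mfactor_ne_zero (α : ℂ) : mfactor α ≠ 0 := by
  intro h
  have h2 := mfactor_leadingCoeff α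
  rw [h, leadingCoeff_zero, norm_zero] at h2
  have : (1:ℝ) ≤ 0 := by rw [h2]; exact le_max_left _ _
  linarith

lemma norm_multiset_prod' (s : Multiset ℂ) : ‖s.prod‖ = (s.map (fun z => ‖z‖)).prod := by
  induction s using Multiset.induction with
  | empty => simp
  | cons a s ih => simp [norm_mul, ih]

lemma leadingCoeff_le_sqrt_cN (q : Polynomial ℂ) :
    ‖q.leadingCoeff‖ ≤ Real.sqrt (cN q) := by
  rcases eq_or_ne q 0 with rfl | hq
  · simp [cN, Real.sqrt_nonneg]
  · have hmem : q.natDegree ∈ q.support := by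
      rw [Polynomial.mem_support_iff]
      exact Polynomial.leadingCoeff_ne_zero.2 hq
    have : ‖q.leadingCoeff‖^2 ≤ cN q :=
      Finset.single_le_sum (f := fun i => ‖q.coeff i‖^2) (fun i _ => sq_nonneg _) hmem
    calc ‖q.leadingCoeff‖ = Real.sqrt (‖q.leadingCoeff‖^2) := (Real.sqrt_sq (norm_nonneg _)).symm
    _ ≤ Real.sqrt (cN q) := Real.sqrt_le_sqrt this

/-- Landau's inequality: the Mahler measure is at most the ℓ₂ norm. -/
lemma landau (p : Polynomial ℂ) :
    ‖p.leadingCoeff‖ * ((p.roots).map fun α => max 1 ‖α‖).prod ≤ Real.sqrt (cN p) := by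
  rcases eq_or_ne p 0 with rfl | hp
  · simp [cN]
  have hsplit : p = C p.leadingCoeff * (p.roots.map fun a => X - C a).prod :=
    (IsAlgClosed.splits p).eq_prod_roots
  set q : Polynomial ℂ := (p.roots.map mfactor).prod * C p.leadingCoeff with hq
  have hcn : cN p = cN q := by
    conv_lhs => rw [hsplit, mul_comm]
    exact cN_flip_prod p.roots (C p.leadingCoeff)
  have hlc : ‖q.leadingCoeff‖
      = ‖p.leadingCoeff‖ * ((p.roots).map fun α => max 1 ‖α‖).prod := by
    rw [hq, leadingCoeff_mul, leadingCoeff_C, norm_mul, mul_comm,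
      leadingCoeff_multiset_prod, norm_multiset_prod', Multiset.map_map, Multiset.map_map]
    simp only [Function.comp]
    rw [Multiset.map_congr rfl fun α _ => mfactor_leadingCoeff α]
  calc ‖p.leadingCoeff‖ * ((p.roots).map fun α => max 1 ‖α‖).prod
      = ‖q.leadingCoeff‖ := hlc.symm
    _ ≤ Real.sqrt (cN q) := leadingCoeff_le_sqrt_cN q
    _ = Real.sqrt (cN p) := by rw [hcn]

lemma one_le_prod_max1 (s : Multiset ℂ) : 1 ≤ (s.map fun α => max 1 ‖α‖).prod := by
  induction s using Multiset.induction with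
  | empty => simp
  | cons a s ih =>
    rw [Multiset.map_cons, Multiset.prod_cons]
    nlinarith [le_max_left 1 ‖a‖, ih]

lemma prod_map_norm_nonneg (t : Multiset ℂ) : 0 ≤ (t.map fun z => ‖z‖).prod := by
  induction t using Multiset.induction with
  | empty => simp
  | cons a t ih =>
    rw [Multiset.map_cons, Multiset.prod_cons]
    exact mul_nonneg (norm_nonneg _) ih

lemma prod_norm_le_prod_max1 (t : Multiset ℂ) :
    (t.map fun z => ‖z‖).prod ≤ (t.map fun α => max 1 ‖α‖).prod := by
  induction t using Multiset.induction with
  | empty => simp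
  | cons a t ih =>
    rw [Multiset.map_cons, Multiset.prod_cons, Multiset.map_cons, Multiset.prod_cons]
    exact mul_le_mul (le_max_right _ _) ih (prod_map_norm_nonneg t)
      (le_trans zero_le_one (le_max_left _ _))

lemma prod_max1_mono {t s : Multiset ℂ} (h : t ≤ s) :
    (t.map fun α => max 1 ‖α‖).prod ≤ (s.map fun α => max 1 ‖α‖).prod := by
  obtain ⟨u, rfl⟩ := Multiset.le_iff_exists_add.1 h
  rw [Multiset.map_add, Multiset.prod_add]
  nlinarith [one_le_prod_max1 t, one_le_prod_max1 u]

lemma norm_esymm_le (s : Multiset ℂ) (k : ℕ) :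
    ‖s.esymm k‖ ≤ ((Multiset.card s).choose k : ℝ) * (s.map fun α => max 1 ‖α‖).prod := by
  rw [Multiset.esymm]
  refine le_trans (norm_multiset_sum_le _) ?_
  rw [Multiset.map_map]
  have hb : ∀ x ∈ (s.powersetCard k).map (fun t => ‖t.prod‖),
      x ≤ (s.map fun α => max 1 ‖α‖).prod := by
    intro x hx
    obtain ⟨t, ht, rfl⟩ := Multiset.mem_map.1 hx
    have hts : t ≤ s := (Multiset.mem_powersetCard.1 ht).1
    calc ‖t.prod‖ = (t.map fun z => ‖z‖).prod := norm_multiset_prod' t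
      _ ≤ (t.map fun α => max 1 ‖α‖).prod := prod_norm_le_prod_max1 t
      _ ≤ (s.map fun α => max 1 ‖α‖).prod := prod_max1_mono hts
  have := Multiset.sum_le_card_nsmul _ _ hb
  rw [Multiset.card_map, Multiset.card_powersetCard] at this
  simpa [nsmul_eq_mul, Function.comp] using this

lemma choose_le_two_pow_real (n i : ℕ) : (n.choose i : ℝ) ≤ 2 ^ n := by
  have h : n.choose i ≤ 2 ^ n := by
    rcases le_or_gt i n with hi | hi
    · have h1 : n.choose i ≤ ∑ j ∈ Finset.range (n+1), n.choose j :=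
        Finset.single_le_sum (f := fun j => n.choose j) (fun _ _ => Nat.zero_le _)
          (Finset.mem_range.2 (by omega))
      rwa [Nat.sum_range_choose n] at h1
    · rw [Nat.choose_eq_zero_of_lt hi]; exact Nat.zero_le _
  calc (n.choose i : ℝ) ≤ ((2^n : ℕ) : ℝ) := by exact_mod_cast h
    _ = 2 ^ n := by push_cast; ring

lemma sqrt_cN_le (p : Polynomial ℂ) :
    Real.sqrt (cN p) ≤ 2 ^ p.natDegree
      * (‖p.leadingCoeff‖ * ((p.roots).map fun α => max 1 ‖α‖).prod) := by
  rcases eq_or_ne p 0 with rfl | hp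
  · simp [cN]
  set n := p.natDegree with hn
  set Mp : ℝ := ‖p.leadingCoeff‖ * ((p.roots).map fun α => max 1 ‖α‖).prod with hMp
  have hMp0 : 0 ≤ Mp :=
    mul_nonneg (norm_nonneg _) (le_trans zero_le_one (one_le_prod_max1 _))
  have hcard : p.roots.card = n := (splits_iff_card_roots).1 (IsAlgClosed.splits p)
  have hcoeff : ∀ i, i ≤ n → ‖p.coeff i‖ ≤ (n.choose i : ℝ) * Mp := by
    intro i hi
    rw [coeff_eq_esymm_roots_of_card (hcard.trans hn) hi]
    rw [norm_mul, norm_mul, norm_pow, norm_neg, norm_one, one_pow, mul_one]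
    calc ‖p.leadingCoeff‖ * ‖p.roots.esymm (n - i)‖
        ≤ ‖p.leadingCoeff‖ * (((Multiset.card p.roots).choose (n-i) : ℝ)
            * (p.roots.map fun α => max 1 ‖α‖).prod) :=
          mul_le_mul_of_nonneg_left (norm_esymm_le _ _) (norm_nonneg _)
      _ = (n.choose i : ℝ) * Mp := by
          rw [hcard, Nat.choose_symm hi, hMp]; ring
  have hsum : cN p ≤ (2:ℝ)^n * (2:ℝ)^n * Mp^2 := by
    rw [cN_eq_range (show p.natDegree < n + 1 by omega)]
    have hterm : ∀ i ∈ Finset.range (n+1),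
        ‖p.coeff i‖^2 ≤ (n.choose i : ℝ) * ((2:ℝ)^n * Mp^2) := by
      intro i hi
      have hi' : i ≤ n := by simpa using Nat.lt_succ_iff.1 (Finset.mem_range.1 hi)
      have h1 : ‖p.coeff i‖^2 ≤ ((n.choose i : ℝ) * Mp)^2 := by
        have := hcoeff i hi'
        nlinarith [norm_nonneg (p.coeff i)]
      have h2 : ((n.choose i : ℝ) * Mp)^2 ≤ (n.choose i : ℝ) * ((2:ℝ)^n * Mp^2) := by
        have hc2 : (n.choose i : ℝ) ≤ 2^n := choose_le_two_pow_real n i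
        have hc0 : (0:ℝ) ≤ (n.choose i : ℝ) := Nat.cast_nonneg _
        nlinarith [mul_le_mul_of_nonneg_right
          (mul_le_mul_of_nonneg_left hc2 hc0) (sq_nonneg Mp)]
      linarith
    calc ∑ i ∈ Finset.range (n+1), ‖p.coeff i‖^2
        ≤ ∑ i ∈ Finset.range (n+1), (n.choose i : ℝ) * ((2:ℝ)^n * Mp^2) :=
          Finset.sum_le_sum hterm
      _ = (∑ i ∈ Finset.range (n+1), (n.choose i : ℝ)) * ((2:ℝ)^n * Mp^2) := by
          rw [Finset.sum_mul]
      _ = (2:ℝ)^n * (2:ℝ)^n * Mp^2 := by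
          have : (∑ i ∈ Finset.range (n+1), (n.choose i : ℝ)) = 2^n := by
            rw [← Nat.cast_sum, Nat.sum_range_choose]; push_cast; ring
          rw [this]; ring
  calc Real.sqrt (cN p) ≤ Real.sqrt (((2:ℝ)^n * Mp)^2) := by
        apply Real.sqrt_le_sqrt; nlinarith [hsum]
    _ = (2:ℝ)^n * Mp := Real.sqrt_sq (by positivity)

noncomputable def toC (p : Polynomial ℤ) : Polynomial ℂ := p.map (Int.castRingHom ℂ)

lemma intCast_inj_C : Function.Injective (Int.castRingHom ℂ) := fun a b h => by
  simpa using h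

lemma toC_ne_zero {p : Polynomial ℤ} (hp : p ≠ 0) : toC p ≠ 0 := by
  unfold toC
  intro h
  exact hp (Polynomial.map_injective _ intCast_inj_C (by simpa using h))

lemma l2norm_eq (p : Polynomial ℤ) : l2norm p = Real.sqrt (cN (toC p)) := by
  unfold l2norm cN toC
  congr 1
  rw [Polynomial.support_map_of_injective p intCast_inj_C]
  apply Finset.sum_congr rfl
  intro i _
  rw [Polynomial.coeff_map]
  simp only [eq_intCast, Complex.norm_intCast, sq_abs]

lemma l2norm_nonneg (p : Polynomial ℤ) : 0 ≤ l2norm p := Real.sqrt_nonneg _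

/-- The Mahler measure of the complexification. -/
noncomputable def Mz (p : Polynomial ℤ) : ℝ :=
  ‖(toC p).leadingCoeff‖ * (((toC p).roots).map fun α => max 1 ‖α‖).prod

lemma Mz_nonneg (p : Polynomial ℤ) : 0 ≤ Mz p :=
  mul_nonneg (norm_nonneg _) (le_trans zero_le_one (one_le_prod_max1 _))

lemma one_le_Mz {p : Polynomial ℤ} (hp : p ≠ 0) : 1 ≤ Mz p := by
  have hlc : (toC p).leadingCoeff = ((p.leadingCoeff : ℤ) : ℂ) := by
    unfold toC
    rw [Polynomial.leadingCoeff_map_of_injective intCast_inj_C]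
    simp
  have h1 : (1:ℝ) ≤ ‖(toC p).leadingCoeff‖ := by
    rw [hlc, Complex.norm_intCast]
    have : p.leadingCoeff ≠ 0 := Polynomial.leadingCoeff_ne_zero.2 hp
    have := Int.one_le_abs this
    calc (1:ℝ) = ((1:ℤ) : ℝ) := by norm_num
      _ ≤ ((|p.leadingCoeff| : ℤ) : ℝ) := by exact_mod_cast this
      _ = |(p.leadingCoeff : ℝ)| := by push_cast; ring
  unfold Mz
  nlinarith [one_le_prod_max1 ((toC p).roots)]

lemma Mz_mono {g f : Polynomial ℤ} (hf : f ≠ 0) (hdvd : g ∣ f) : Mz g ≤ Mz f := by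
  obtain ⟨h, rfl⟩ := hdvd
  have hg : g ≠ 0 := fun h0 => hf (by rw [h0, zero_mul])
  have hh : h ≠ 0 := fun h0 => hf (by rw [h0, mul_zero])
  have hmul : toC (g * h) = toC g * toC h := Polynomial.map_mul _
  have hne : toC g * toC h ≠ 0 :=
    mul_ne_zero (toC_ne_zero hg) (toC_ne_zero hh)
  have : Mz (g * h) = Mz g * Mz h := by
    unfold Mz
    rw [hmul, Polynomial.leadingCoeff_mul, Polynomial.roots_mul hne, norm_mul,
      Multiset.map_add, Multiset.prod_add]
    ring
  rw [this]
  nlinarith [one_le_Mz hh, Mz_nonneg g]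

lemma natDegree_toC (p : Polynomial ℤ) : (toC p).natDegree = p.natDegree :=
  Polynomial.natDegree_map_eq_of_injective intCast_inj_C p

lemma l2norm_le (g f : Polynomial ℤ) (hf : f ≠ 0) (hdvd : g ∣ f) :
    l2norm g ≤ 2 ^ g.natDegree * l2norm f := by
  rcases eq_or_ne g 0 with rfl | hg
  · have : l2norm (0 : Polynomial ℤ) = 0 := by
      unfold l2norm; simp
    rw [this]
    exact mul_nonneg (by positivity) (l2norm_nonneg f)
  calc l2norm g = Real.sqrt (cN (toC g)) := l2norm_eq g
    _ ≤ 2 ^ (toC g).natDegree * Mz g := sqrt_cN_le (toC g)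
    _ = 2 ^ g.natDegree * Mz g := by rw [natDegree_toC]
    _ ≤ 2 ^ g.natDegree * Mz f := by
        apply mul_le_mul_of_nonneg_left (Mz_mono hf hdvd) (by positivity)
    _ ≤ 2 ^ g.natDegree * Real.sqrt (cN (toC f)) := by
        apply mul_le_mul_of_nonneg_left (landau (toC f)) (by positivity)
    _ = 2 ^ g.natDegree * l2norm f := by rw [l2norm_eq]

/-- Mignotte-type height bound: if g divides f ≠ 0 in ℤ[x], then
H(g) ≤ ‖g‖₂ ≤ 2^{deg g}·‖f‖₂ ≤ 2^{deg f}·‖f‖₂. -/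
theorem mignotte_height_bound (f g : Polynomial ℤ) (hf : f ≠ 0) (hdvd : g ∣ f) :
    (∀ i, |(g.coeff i : ℝ)| ≤ l2norm g) ∧
    l2norm g ≤ 2 ^ g.natDegree * l2norm f ∧
    (2 : ℝ) ^ g.natDegree * l2norm f ≤ 2 ^ f.natDegree * l2norm f := by
  refine ⟨?_, ?_, ?_⟩
  · intro i
    rcases eq_or_ne (g.coeff i) 0 with h0 | h0
    · rw [h0]
      simpa using l2norm_nonneg g
    · have hmem : i ∈ g.support := Polynomial.mem_support_iff.2 h0
      have hs : ((g.coeff i : ℝ))^2 ≤ ∑ j ∈ g.support, ((g.coeff j : ℝ))^2 :=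
        Finset.single_le_sum (f := fun j => ((g.coeff j : ℝ))^2) (fun _ _ => sq_nonneg _) hmem
      calc |(g.coeff i : ℝ)| = Real.sqrt (((g.coeff i : ℝ))^2) := (Real.sqrt_sq_eq_abs _).symm
        _ ≤ l2norm g := Real.sqrt_le_sqrt hs
  · exact l2norm_le g f hf hdvd
  · have hdeg : g.natDegree ≤ f.natDegree := Polynomial.natDegree_le_of_dvd hdvd hf
    exact mul_le_mul_of_nonneg_right
      (pow_le_pow_right₀ (by norm_num) hdeg) (l2norm_nonneg f)
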